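/- Let X and Y be finite multisets of points (b,d) ∈ ℝ × ℝ with b < d for every point. If the rank functions of X and Y agree, i.e., f_X(x,y) = f_Y(x,y) for all (x,y) ∈ ℝ × ℝ with x < y, then X = Y as multisets. -/

import Mathlib

/-- The rank function of a persistence diagram given as a finite multiset of
points in `ℝ × ℝ`: the number of points `(b, d)` of `D`, counted with
multiplicity, with `b ≤ x` and `y ≤ d`. -/
noncomputable def diagRank (D : Multiset (ℝ × ℝ)) (x y : ℝ) : ℕ :=
  (D.filter fun p => p.1 ≤ x ∧ y ≤ p.2).card

lemma exists_sep (s : Multiset ℝ) (b : ℝ) :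
    ∃ x' < b, ∀ r ∈ s, (r ≤ x' ↔ r < b) := by
  classical
  set T := s.toFinset.filter (· < b) with hT
  by_cases hne : T.Nonempty
  · refine ⟨T.max' hne, ?_, ?_⟩
    · have := T.max'_mem hne
      simp only [hT, Finset.mem_filter] at this
      exact this.2
    · intro r hr
      constructor
      · intro hle
        have hx : T.max' hne < b := by
          have := T.max'_mem hne
          simp only [hT, Finset.mem_filter] at this
          exact this.2
        linarith
      · intro hlt
        apply T.le_max'
        simp [hT, Multiset.mem_toFinset.mpr hr, hlt]
  · refine ⟨b - 1, by linarith, ?_⟩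
    intro r hr
    have hnotlt : ¬ r < b := by
      intro hlt
      exact hne ⟨r, by simp [hT, Multiset.mem_toFinset.mpr hr, hlt]⟩
    constructor
    · intro hle; linarith
    · intro hlt; exact absurd hlt hnotlt

lemma exists_sep' (s : Multiset ℝ) (d : ℝ) :
    ∃ y' > d, ∀ r ∈ s, (y' ≤ r ↔ d < r) := by
  obtain ⟨x', hx', hsep⟩ := exists_sep (s.map (fun r => -r)) (-d)
  refine ⟨-x', by linarith, ?_⟩
  intro r hr
  have := hsep (-r) (Multiset.mem_map_of_mem _ hr)
  constructor
  · intro hle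
    have : -r < -d := this.mp (by linarith)
    linarith
  · intro hlt
    have : -r ≤ x' := this.mpr (by linarith)
    linarith

lemma pt (a : ℝ × ℝ) (b d x' y' : ℝ)
    (ha1 : a.1 ≤ x' ↔ a.1 < b) (ha2 : y' ≤ a.2 ↔ d < a.2) :
    ((if a.1 ≤ b ∧ d ≤ a.2 then 1 else 0) : ℕ)
        + (if a.1 ≤ x' ∧ y' ≤ a.2 then 1 else 0)
      = (if (b, d) = a then 1 else 0)
        + ((if a.1 ≤ x' ∧ d ≤ a.2 then 1 else 0)
            + (if a.1 ≤ b ∧ y' ≤ a.2 then 1 else 0)) := by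
  simp only [ha1, ha2, Prod.ext_iff]
  rcases lt_trichotomy a.1 b with hb | hb | hb <;>
    rcases lt_trichotomy d a.2 with hd | hd | hd <;>
    first
    | (simp [hb, hb.le, hb.ne', hd, hd.le, hd.ne]; done)
    | (simp [hb, hb.le, hb.ne', hd]; done)
    | (simp [hb, hb.le, hb.ne', not_le.mpr hd, lt_asymm hd, hd.ne']; done)
    | (simp [hb, hd, hd.le, hd.ne]; done)
    | (simp [hb, hd]; done)
    | (simp [hb, not_le.mpr hd, lt_asymm hd, hd.ne']; done)
    | (simp [not_le.mpr hb, lt_asymm hb, hb.ne, hd, hd.le, hd.ne]; done)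
    | (simp [not_le.mpr hb, lt_asymm hb, hb.ne, hd]; done)
    | (simp [not_le.mpr hb, lt_asymm hb, hb.ne, not_le.mpr hd, lt_asymm hd, hd.ne']; done)

lemma key (Z : Multiset (ℝ × ℝ)) (b d x' y' : ℝ)
    (h1 : ∀ p ∈ Z, (p.1 ≤ x' ↔ p.1 < b)) (h2 : ∀ p ∈ Z, (y' ≤ p.2 ↔ d < p.2)) :
    diagRank Z b d + diagRank Z x' y' =
      Z.count (b, d) + (diagRank Z x' d + diagRank Z b y') := by
  classical
  induction Z using Multiset.induction with
  | empty => simp [diagRank]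
  | cons a Z ih =>
    have ha1 := h1 a (Multiset.mem_cons_self a Z)
    have ha2 := h2 a (Multiset.mem_cons_self a Z)
    have ih' := ih (fun p hp => h1 p (Multiset.mem_cons_of_mem hp))
      (fun p hp => h2 p (Multiset.mem_cons_of_mem hp))
    have hpt := pt a b d x' y' ha1 ha2
    simp only [diagRank, Multiset.filter_cons, Multiset.count_cons,
      Multiset.card_add, apply_ite Multiset.card, Multiset.card_singleton,
      Multiset.card_zero] at ih' ⊢
    linarith [hpt, ih']

theorem rank_function_determines_diagram
    (X Y : Multiset (ℝ × ℝ))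
    (hX : ∀ p ∈ X, p.1 < p.2) (hY : ∀ p ∈ Y, p.1 < p.2)
    (h : ∀ x y : ℝ, x < y → diagRank X x y = diagRank Y x y) :
    X = Y := by
  classical
  ext q
  obtain ⟨b, d⟩ := q
  by_cases hbd : b < d
  · obtain ⟨x', hx'b, hsep1⟩ := exists_sep ((X + Y).map Prod.fst) b
    obtain ⟨y', hy'd, hsep2⟩ := exists_sep' ((X + Y).map Prod.snd) d
    have h1X : ∀ p ∈ X, (p.1 ≤ x' ↔ p.1 < b) := fun p hp =>
      hsep1 p.1 (Multiset.mem_map_of_mem _ (Multiset.mem_add.mpr (Or.inl hp)))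
    have h1Y : ∀ p ∈ Y, (p.1 ≤ x' ↔ p.1 < b) := fun p hp =>
      hsep1 p.1 (Multiset.mem_map_of_mem _ (Multiset.mem_add.mpr (Or.inr hp)))
    have h2X : ∀ p ∈ X, (y' ≤ p.2 ↔ d < p.2) := fun p hp =>
      hsep2 p.2 (Multiset.mem_map_of_mem _ (Multiset.mem_add.mpr (Or.inl hp)))
    have h2Y : ∀ p ∈ Y, (y' ≤ p.2 ↔ d < p.2) := fun p hp =>
      hsep2 p.2 (Multiset.mem_map_of_mem _ (Multiset.mem_add.mpr (Or.inr hp)))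
    have kX := key X b d x' y' h1X h2X
    have kY := key Y b d x' y' h1Y h2Y
    have e1 := h b d hbd
    have e2 := h x' y' (by linarith)
    have e3 := h x' d (by linarith)
    have e4 := h b y' (by linarith)
    omega
  · have hnX : (b, d) ∉ X := fun hm => hbd (hX _ hm)
    have hnY : (b, d) ∉ Y := fun hm => hbd (hY _ hm)
    rw [Multiset.count_eq_zero_of_notMem hnX, Multiset.count_eq_zero_of_notMem hnY]
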